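/- Let n ≥ 1, x ∈ Sⁿ, and 0 < r < R < π, and let C = closure(B(x,R)) \ B(x,r) be the closed spherical annulus around x in the n-sphere with its intrinsic metric. Then the set of strict contractions is not dense in the space M of nonexpansive self-maps of C with the supremum metric. -/

import Mathlib

open Real

/-- The unit `n`-sphere in Euclidean `(n+1)`-space. -/
abbrev Sph (n : ℕ) : Type := Metric.sphere (0 : EuclideanSpace ℝ (Fin (n + 1))) 1

/-- The intrinsic (great-circle) metric on the unit `n`-sphere. -/
noncomputable def gd {n : ℕ} (x y : Sph n) : ℝ :=
  Real.arccos (inner ℝ (x : EuclideanSpace ℝ (Fin (n + 1))) (y : EuclideanSpace ℝ (Fin (n + 1))))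

/-- A self-map of `C` is nonexpansive with respect to the intrinsic metric. -/
def NonexpOn {n : ℕ} {C : Set (Sph n)} (f : C → C) : Prop :=
  ∀ y z : C, gd (f y).1 (f z).1 ≤ gd y.1 z.1

/-- The supremum metric on self-maps of `C`. -/
noncomputable def dSup {n : ℕ} {C : Set (Sph n)} (f g : C → C) : ℝ :=
  ⨆ z : C, gd (f z).1 (g z).1

/-- `f` is a strict contraction: Lipschitz with some constant `L < 1`. -/
def StrictContractionOn {n : ℕ} {C : Set (Sph n)} (f : C → C) : Prop :=
  ∃ L : ℝ, L < 1 ∧ ∀ y z : C, gd (f y).1 (f z).1 ≤ L * gd y.1 z.1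

open RealInnerProductSpace

lemma aux_abs_inner_le {F : Type*} [NormedAddCommGroup F] [InnerProductSpace ℝ F]
    {a b : F} (ha : ‖a‖ = 1) (hb : ‖b‖ = 1) : |⟪a, b⟫| ≤ 1 := by
  simpa [ha, hb] using abs_real_inner_le_norm a b

lemma aux_norm_sub_sq {F : Type*} [NormedAddCommGroup F] [InnerProductSpace ℝ F]
    {a b : F} (ha : ‖a‖ = 1) (hb : ‖b‖ = 1) : ‖a - b‖ ^ 2 = 2 - 2 * ⟪a, b⟫ := by
  rw [norm_sub_sq_real, ha, hb]; ring

lemma aux_chord_le {F : Type*} [NormedAddCommGroup F] [InnerProductSpace ℝ F]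
    {a b : F} (ha : ‖a‖ = 1) (hb : ‖b‖ = 1) : ‖a - b‖ ≤ Real.arccos ⟪a, b⟫ := by
  have hc := aux_abs_inner_le ha hb
  have hcos : Real.cos (Real.arccos ⟪a, b⟫) = ⟪a, b⟫ :=
    Real.cos_arccos (abs_le.mp hc).1 (abs_le.mp hc).2
  have hsq := aux_norm_sub_sq ha hb
  have h1 := Real.one_sub_sq_div_two_le_cos (x := Real.arccos ⟪a, b⟫)
  rw [hcos] at h1
  nlinarith [Real.arccos_nonneg ⟪a, b⟫, norm_nonneg (a - b)]

lemma aux_gd_le_chord {F : Type*} [NormedAddCommGroup F] [InnerProductSpace ℝ F]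
    {a b : F} (ha : ‖a‖ = 1) (hb : ‖b‖ = 1) :
    Real.arccos ⟪a, b⟫ ≤ π / 2 * ‖a - b‖ := by
  have hc := aux_abs_inner_le ha hb
  have hcos : Real.cos (Real.arccos ⟪a, b⟫) = ⟪a, b⟫ :=
    Real.cos_arccos (abs_le.mp hc).1 (abs_le.mp hc).2
  have hsq := aux_norm_sub_sq ha hb
  have habs : |Real.arccos ⟪a, b⟫| ≤ π :=
    abs_le.mpr ⟨by linarith [Real.arccos_nonneg ⟪a, b⟫, Real.pi_pos], Real.arccos_le_pi _⟩
  have h1 := Real.cos_le_one_sub_mul_cos_sq habs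
  rw [hcos] at h1
  have hπ : (0:ℝ) < π := Real.pi_pos
  have h3 : 2 / π ^ 2 * Real.arccos ⟪a, b⟫ ^ 2 ≤ ‖a - b‖ ^ 2 / 2 := by linarith
  have h4 : Real.arccos ⟪a, b⟫ ^ 2 ≤ (π / 2 * ‖a - b‖) ^ 2 := by
    have h5 : Real.arccos ⟪a, b⟫ ^ 2 = (2 / π ^ 2 * Real.arccos ⟪a, b⟫ ^ 2) * (π ^ 2 / 2) := by
      field_simp
    rw [h5]
    calc (2 / π ^ 2 * Real.arccos ⟪a, b⟫ ^ 2) * (π ^ 2 / 2)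
        ≤ (‖a - b‖ ^ 2 / 2) * (π ^ 2 / 2) :=
          mul_le_mul_of_nonneg_right h3 (by positivity)
      _ = (π / 2 * ‖a - b‖) ^ 2 := by ring
  have h6 := Real.sqrt_le_sqrt h4
  rwa [Real.sqrt_sq (Real.arccos_nonneg _), Real.sqrt_sq (by positivity)] at h6

theorem strict_contractions_not_dense_on_annulus
    (n : ℕ) (hn : 1 ≤ n) (x : Sph n) (r R : ℝ) (hr : 0 < r) (hrR : r < R) (hR : R < π)
    (C : Set (Sph n))
    (hC : C = closure {y : Sph n | gd x y < R} \ {y : Sph n | gd x y < r}) :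
    ∃ f : C → C, NonexpOn f ∧
      ∃ δ : ℝ, 0 < δ ∧ ∀ g : C → C, NonexpOn g → StrictContractionOn g → δ ≤ dSup f g := by
  classical
  have hπ : (0:ℝ) < π := Real.pi_pos
  have hx1 : ‖(x : EuclideanSpace ℝ (Fin (n + 1)))‖ = 1 := mem_sphere_zero_iff_norm.mp x.2
  have hxx : ⟪(x : EuclideanSpace ℝ (Fin (n + 1))), (x : EuclideanSpace ℝ (Fin (n + 1)))⟫ = 1 := by
    rw [real_inner_self_eq_norm_sq, hx1]; norm_num
  have hunit : ∀ y : Sph n, ‖(y : EuclideanSpace ℝ (Fin (n + 1)))‖ = 1 :=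
    fun y => mem_sphere_zero_iff_norm.mp y.2
  -- the reflection through the axis of x
  set Tv : Sph n → EuclideanSpace ℝ (Fin (n + 1)) :=
    fun y => (2 * ⟪(y : EuclideanSpace ℝ (Fin (n + 1))), (x : EuclideanSpace ℝ (Fin (n + 1)))⟫) •
      (x : EuclideanSpace ℝ (Fin (n + 1))) - (y : EuclideanSpace ℝ (Fin (n + 1))) with hTv
  have hTT : ∀ y z : Sph n, ⟪Tv y, Tv z⟫ = ⟪(y : EuclideanSpace ℝ (Fin (n + 1))),
      (z : EuclideanSpace ℝ (Fin (n + 1)))⟫ := by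
    intro y z
    simp only [hTv, inner_sub_left, inner_sub_right, real_inner_smul_left, real_inner_smul_right,
      hxx]
    rw [real_inner_comm (z : EuclideanSpace ℝ (Fin (n + 1))) (x : EuclideanSpace ℝ (Fin (n + 1)))]
    ring
  have hTnorm : ∀ y : Sph n, ‖Tv y‖ = 1 := by
    intro y
    have h1 : ‖Tv y‖ ^ 2 = 1 := by
      rw [← real_inner_self_eq_norm_sq, hTT y y, real_inner_self_eq_norm_sq, hunit y]; norm_num
    nlinarith [norm_nonneg (Tv y)]
  set Tm : Sph n → Sph n := fun y => ⟨Tv y, mem_sphere_zero_iff_norm.mpr (hTnorm y)⟩ with hTm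
  have hTx : ∀ y : Sph n, ⟪(x : EuclideanSpace ℝ (Fin (n + 1))), Tv y⟫ =
      ⟪(x : EuclideanSpace ℝ (Fin (n + 1))), (y : EuclideanSpace ℝ (Fin (n + 1)))⟫ := by
    intro y
    simp only [hTv, inner_sub_right, real_inner_smul_right, hxx]
    rw [real_inner_comm (y : EuclideanSpace ℝ (Fin (n + 1))) (x : EuclideanSpace ℝ (Fin (n + 1)))]
    ring
  have hgdT : ∀ y : Sph n, gd x (Tm y) = gd x y := by
    intro y
    show Real.arccos _ = Real.arccos _
    rw [show ((Tm y : Sph n) : EuclideanSpace ℝ (Fin (n + 1))) = Tv y from rfl, hTx y]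
  have hTcont : Continuous Tm := by
    apply Continuous.subtype_mk
    exact ((continuous_const.mul ((continuous_subtype_val).inner (𝕜 := ℝ) continuous_const)).smul
      continuous_const).sub continuous_subtype_val
  have hgdcont : Continuous fun y : Sph n => gd x y := by
    exact Real.continuous_arccos.comp (continuous_const.inner continuous_subtype_val)
  -- membership
  have hmem : ∀ y : Sph n, y ∈ C → Tm y ∈ C := by
    intro y hy
    rw [hC] at hy ⊢
    refine ⟨?_, ?_⟩
    · have hsub : {y : Sph n | gd x y < R} ⊆ Tm ⁻¹' closure {y : Sph n | gd x y < R} := by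
        intro z hz
        exact subset_closure (show gd x (Tm z) < R by rw [hgdT z]; exact hz)
      exact closure_minimal hsub (isClosed_closure.preimage hTcont) hy.1
    · intro hcon
      exact hy.2 (show gd x y < r by rw [← hgdT y]; exact hcon)
  refine ⟨fun z => ⟨Tm z.1, hmem z.1 z.2⟩, ?_, ?_⟩
  · intro y z
    refine le_of_eq ?_
    show Real.arccos _ = Real.arccos _
    rw [show ((Tm y.1 : Sph n) : EuclideanSpace ℝ (Fin (n + 1))) = Tv y.1 from rfl,
      show ((Tm z.1 : Sph n) : EuclideanSpace ℝ (Fin (n + 1))) = Tv z.1 from rfl, hTT]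
  -- the separation constant
  refine ⟨min (2 * r) (2 * (π - R)), lt_min (by linarith) (by linarith), ?_⟩
  -- C is compact
  have hCclosed : IsClosed C := by
    rw [hC, Set.diff_eq]
    exact isClosed_closure.inter ((isOpen_lt hgdcont continuous_const).isClosed_compl)
  have hCcomp : IsCompact C := hCclosed.isCompact
  -- C is nonempty
  haveI : Fact (Module.finrank ℝ (EuclideanSpace ℝ (Fin (n + 1))) = n + 1) :=
    ⟨finrank_euclideanSpace_fin⟩
  have hx0 : (x : EuclideanSpace ℝ (Fin (n + 1))) ≠ 0 := by
    intro h; rw [h] at hx1; simp at hx1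
  have hne : ((ℝ ∙ (x : EuclideanSpace ℝ (Fin (n + 1))))ᗮ) ≠ ⊥ := by
    intro h
    have hfr := Submodule.finrank_orthogonal_span_singleton (𝕜 := ℝ) (n := n) hx0
    rw [h, finrank_bot] at hfr
    omega
  obtain ⟨v, hvmem, hv0⟩ := Submodule.exists_mem_ne_zero_of_ne_bot hne
  have hxv : ⟪(x : EuclideanSpace ℝ (Fin (n + 1))), v⟫ = 0 :=
    Submodule.mem_orthogonal_singleton_iff_inner_right.mp hvmem
  set u : EuclideanSpace ℝ (Fin (n + 1)) := ‖v‖⁻¹ • v with hu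
  have hu1 : ‖u‖ = 1 := by
    rw [hu, norm_smul, norm_inv, norm_norm]
    field_simp [norm_ne_zero_iff.mpr hv0]
  have hxu : ⟪(x : EuclideanSpace ℝ (Fin (n + 1))), u⟫ = 0 := by
    rw [hu, real_inner_smul_right, hxv, mul_zero]
  set ρ : ℝ := (r + R) / 2 with hρ
  have hρ0 : 0 < ρ := by rw [hρ]; linarith
  have hρπ : ρ < π := by rw [hρ]; linarith
  set w : EuclideanSpace ℝ (Fin (n + 1)) :=
    Real.cos ρ • (x : EuclideanSpace ℝ (Fin (n + 1))) + Real.sin ρ • u with hw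
  have hww : ⟪w, w⟫ = 1 := by
    simp only [hw, inner_add_left, inner_add_right, real_inner_smul_left, real_inner_smul_right,
      hxx, hxu]
    rw [real_inner_comm (x : EuclideanSpace ℝ (Fin (n + 1))) u, hxu,
      real_inner_self_eq_norm_sq u, hu1]
    linear_combination Real.sin_sq_add_cos_sq ρ
  have hwnorm : ‖w‖ = 1 := by
    have h1 : ‖w‖ ^ 2 = 1 := by rw [← real_inner_self_eq_norm_sq, hww]
    nlinarith [norm_nonneg w]
  have hxw : ⟪(x : EuclideanSpace ℝ (Fin (n + 1))), w⟫ = Real.cos ρ := by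
    simp only [hw, inner_add_right, real_inner_smul_right, hxx, hxu]
    ring
  set y₀ : Sph n := ⟨w, mem_sphere_zero_iff_norm.mpr hwnorm⟩ with hy₀
  have hgdy₀ : gd x y₀ = ρ := by
    show Real.arccos _ = ρ
    rw [show ((y₀ : Sph n) : EuclideanSpace ℝ (Fin (n + 1))) = w from rfl, hxw,
      Real.arccos_cos hρ0.le hρπ.le]
  have hy₀C : y₀ ∈ C := by
    rw [hC]
    refine ⟨subset_closure ?_, ?_⟩
    · show gd x y₀ < R; rw [hgdy₀, hρ]; linarith
    · show ¬ gd x y₀ < r; rw [hgdy₀, hρ]; push_neg; linarith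
  haveI : Nonempty C := ⟨⟨y₀, hy₀C⟩⟩
  haveI : CompactSpace C := isCompact_iff_compactSpace.mp hCcomp
  -- the main estimate
  intro g hgne hgsc
  obtain ⟨L, hL, hLip⟩ := hgsc
  -- g is continuous
  have hgcont : Continuous g := by
    rw [Metric.continuous_iff]
    intro a ε hε
    refine ⟨2 / π * ε, by positivity, fun b hb => ?_⟩
    have h1 : dist (g b) (g a) ≤ gd (g b).1 (g a).1 := by
      rw [Subtype.dist_eq, Subtype.dist_eq, dist_eq_norm]
      exact aux_chord_le (hunit (g b).1) (hunit (g a).1)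
    have h2 := hgne b a
    have h3 : gd b.1 a.1 ≤ π / 2 * dist b a := by
      rw [Subtype.dist_eq, Subtype.dist_eq, dist_eq_norm]
      exact aux_gd_le_chord (hunit b.1) (hunit a.1)
    have h4 : π / 2 * dist b a < π / 2 * (2 / π * ε) :=
      mul_lt_mul_of_pos_left hb (by positivity)
    have h5 : π / 2 * (2 / π * ε) = ε := by field_simp
    linarith
  -- g has a fixed point
  have hφcont : Continuous fun z : C => gd z.1 (g z).1 := by
    apply Real.continuous_arccos.comp
    exact (continuous_subtype_val.comp continuous_subtype_val).inner
      ((continuous_subtype_val.comp continuous_subtype_val).comp hgcont)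
  obtain ⟨p, -, hpmin⟩ := isCompact_univ.exists_isMinOn Set.univ_nonempty
    hφcont.continuousOn
  have hfix : g p = p := by
    have h0 : gd p.1 (g p).1 ≤ gd (g p).1 (g (g p)).1 :=
      isMinOn_iff.mp hpmin (g p) (Set.mem_univ _)
    have h1 : gd (g p).1 (g (g p)).1 ≤ L * gd p.1 (g p).1 := hLip p (g p)
    have hnn : 0 ≤ gd p.1 (g p).1 := Real.arccos_nonneg _
    have hzero : gd p.1 (g p).1 = 0 := by
      by_contra hne0
      have hpos : 0 < gd p.1 (g p).1 := lt_of_le_of_ne hnn (Ne.symm hne0)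
      have hmul : L * gd p.1 (g p).1 < 1 * gd p.1 (g p).1 :=
        mul_lt_mul_of_pos_right hL hpos
      rw [one_mul] at hmul
      linarith
    have h2 : (1:ℝ) ≤ ⟪(p.1 : EuclideanSpace ℝ (Fin (n + 1))),
        ((g p).1 : EuclideanSpace ℝ (Fin (n + 1)))⟫ := Real.arccos_eq_zero.mp hzero
    have h3 : ⟪(p.1 : EuclideanSpace ℝ (Fin (n + 1))),
        ((g p).1 : EuclideanSpace ℝ (Fin (n + 1)))⟫ = 1 :=
      le_antisymm (le_of_abs_le (aux_abs_inner_le (hunit p.1) (hunit (g p).1))) h2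
    have h4 : (p.1 : EuclideanSpace ℝ (Fin (n + 1))) = ((g p).1 : EuclideanSpace ℝ (Fin (n + 1))) :=
      (inner_eq_one_iff_of_norm_eq_one (hunit p.1) (hunit (g p).1)).mp h3
    exact Subtype.ext (Subtype.ext h4.symm)
  -- lower bound via the fixed point
  have hbdd : BddAbove (Set.range fun z : C => gd (Tm z.1) (g z).1) := by
    refine ⟨π, ?_⟩
    rintro _ ⟨z, rfl⟩
    exact Real.arccos_le_pi _
  have hle : gd (Tm p.1) (g p).1 ≤ dSup (fun z => ⟨Tm z.1, hmem z.1 z.2⟩) g :=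
    le_ciSup hbdd p
  rw [hfix] at hle
  refine le_trans ?_ hle
  -- compute gd (Tm p.1) p.1
  have hTp : ⟪Tv p.1, (p.1 : EuclideanSpace ℝ (Fin (n + 1)))⟫ =
      2 * ⟪(x : EuclideanSpace ℝ (Fin (n + 1))), (p.1 : EuclideanSpace ℝ (Fin (n + 1)))⟫ ^ 2
        - 1 := by
    simp only [hTv, inner_sub_left, real_inner_smul_left]
    rw [real_inner_comm (x : EuclideanSpace ℝ (Fin (n + 1)))
      (p.1 : EuclideanSpace ℝ (Fin (n + 1))), real_inner_self_eq_norm_sq, hunit p.1]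
    ring
  set c : ℝ := ⟪(x : EuclideanSpace ℝ (Fin (n + 1))), (p.1 : EuclideanSpace ℝ (Fin (n + 1)))⟫
    with hcdef
  have hcabs : |c| ≤ 1 := aux_abs_inner_le hx1 (hunit p.1)
  have hgdval : gd (Tm p.1) p.1 = Real.arccos (2 * c ^ 2 - 1) := by
    show Real.arccos _ = _
    rw [show ((Tm p.1 : Sph n) : EuclideanSpace ℝ (Fin (n + 1))) = Tv p.1 from rfl, hTp]
  rw [hgdval]
  -- θ := gd x p.1 lies in [r, R]
  set θ : ℝ := gd x p.1 with hθdef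
  have hcθ : Real.cos θ = c := Real.cos_arccos (abs_le.mp hcabs).1 (abs_le.mp hcabs).2
  have hθ0 : 0 ≤ θ := Real.arccos_nonneg _
  have hθπ : θ ≤ π := Real.arccos_le_pi _
  have hpC : p.1 ∈ closure {y : Sph n | gd x y < R} \ {y : Sph n | gd x y < r} := by
    rw [← hC]; exact p.2
  have hθr : r ≤ θ := by
    have := hpC.2
    simp only [Set.mem_setOf_eq] at this
    push_neg at this
    exact this
  have hθR : θ ≤ R := by
    have hsub : closure {y : Sph n | gd x y < R} ⊆ {y : Sph n | gd x y ≤ R} :=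
      closure_minimal (fun y hy => show gd x y ≤ R from le_of_lt hy) (isClosed_le hgdcont continuous_const)
    exact hsub hpC.1
  have h2c : 2 * c ^ 2 - 1 = Real.cos (2 * θ) := by rw [Real.cos_two_mul, hcθ]
  clear_value c θ
  clear * - hπ hr hrR hR hθ0 hθπ hθr hθR h2c
  rcases le_or_gt θ (π / 2) with hhalf | hhalf
  · rw [h2c, Real.arccos_cos (by linarith) (by linarith)]
    calc min (2 * r) (2 * (π - R)) ≤ 2 * r := min_le_left _ _
      _ ≤ 2 * θ := by linarith
  · rw [h2c, ← Real.cos_two_pi_sub, Real.arccos_cos (by linarith) (by linarith)]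
    calc min (2 * r) (2 * (π - R)) ≤ 2 * (π - R) := min_le_right _ _
      _ ≤ 2 * π - 2 * θ := by linarith
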